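/- For k ≥ 1 let φ_{2k−1}(x) = sin(kx)/k and φ_{2k}(x) = −cos(kx)/k on 𝕋. Let T : 𝕋 → 𝕋 be a Borel bijection with Borel inverse and ρ a strictly positive continuous probability density on 𝕋 such that T_#(ρ dx) has strictly positive continuous density ρ_T. For each index j ∈ {2k−1, 2k}, define a_j(x) := (∂ₓ²φ_j/ρ_T)(T(x)), b_j(x) := (∂ₓ(∂ₓ²φ_j · ∂ₓφ_j)/ρ_T)(T(x)), Λ_j(f) := −(∫_𝕋 f a_j ρ dx) · (ρ̂_T ∘ T) and Θ_j(f) := −(1/2)(∫_𝕋 f a_j ρ dx) · ((ρ̂_T · ∂ₓ²φ_j) ∘ T) − (1/2)(∫_𝕋 f b_j ρ dx) · (ρ̂_T ∘ T) + (3/2)(∫_𝕋 f a_j ρ dx) · (∫_𝕋 ∂ₓ²φ_j ρ̂_T dx) · (ρ̂_T ∘ T). Then for every f ∈ L²(ρ dx): ‖Λ_j(f)‖_{L²(ρ dx)} ≤ k‖f‖_{L²(ρ dx)} and ‖Θ_j(f)‖_{L²(ρ dx)} ≤ 3k²‖f‖_{L²(ρ dx)}. -/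

import Mathlib

open MeasureTheory Set
open scoped ENNReal NNReal

/-- `σ̂ := 1 / ((∫ σ⁻¹) ⬝ σ)` for a density `σ` on the torus (modelled by
`1`-periodic functions on `ℝ`, with the normalized Lebesgue measure identified
with Lebesgue measure on `(0,1]`). -/
noncomputable def torusHat (σ : ℝ → ℝ) : ℝ → ℝ :=
  fun x => ((∫ y in Set.Ioc (0:ℝ) 1, (σ y)⁻¹) * σ x)⁻¹


-- weighted Cauchy-Schwarz
theorem myCS (ρ : ℝ → ℝ) (hρpos : ∀ x, 0 < ρ x) (hρc : Continuous ρ)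
    (u v : ℝ → ℝ) (hu : Measurable u) (hv : Measurable v)
    (hu2 : IntegrableOn (fun x => u x ^ 2 * ρ x) (Set.Ioc (0:ℝ) 1))
    (hv2 : IntegrableOn (fun x => v x ^ 2 * ρ x) (Set.Ioc (0:ℝ) 1)) :
    |∫ x in Set.Ioc (0:ℝ) 1, u x * v x * ρ x| ≤
      Real.sqrt (∫ x in Set.Ioc (0:ℝ) 1, u x ^ 2 * ρ x) *
      Real.sqrt (∫ x in Set.Ioc (0:ℝ) 1, v x ^ 2 * ρ x) := by
  set ν := volume.restrict (Set.Ioc (0:ℝ) 1)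
  set U : ℝ → ℝ := fun x => u x * Real.sqrt (ρ x) with hU
  set V : ℝ → ℝ := fun x => v x * Real.sqrt (ρ x) with hV
  have hsm : Measurable fun x => Real.sqrt (ρ x) := hρc.measurable.sqrt
  have hUm : AEStronglyMeasurable U ν := (hu.mul hsm).aestronglyMeasurable
  have hVm : AEStronglyMeasurable V ν := (hv.mul hsm).aestronglyMeasurable
  have hsq : ∀ x, Real.sqrt (ρ x) * Real.sqrt (ρ x) = ρ x := fun x =>
    Real.mul_self_sqrt (hρpos x).le
  have hU2 : ∀ x, U x ^ 2 = u x ^ 2 * ρ x := by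
    intro x; simp only [hU]; rw [mul_pow, Real.sq_sqrt (hρpos x).le]
  have hV2 : ∀ x, V x ^ 2 = v x ^ 2 * ρ x := by
    intro x; simp only [hV]; rw [mul_pow, Real.sq_sqrt (hρpos x).le]
  have hUL : MemLp U 2 ν := by
    rw [memLp_two_iff_integrable_sq hUm]
    simpa only [hU2] using hu2.integrable
  have hVL : MemLp V 2 ν := by
    rw [memLp_two_iff_integrable_sq hVm]
    simpa only [hV2] using hv2.integrable
  have hconj : Real.HolderConjugate 2 2 := ⟨by norm_num, by norm_num, by norm_num⟩
  have h2 : (ENNReal.ofReal (2:ℝ)) = 2 := by norm_num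
  have hCS := integral_mul_norm_le_Lp_mul_Lq (μ := ν) hconj (h2 ▸ hUL) (h2 ▸ hVL)
  have heq : ∀ x, |u x * v x * ρ x| = ‖U x‖ * ‖V x‖ := by
    intro x
    simp only [hU, hV, Real.norm_eq_abs, abs_mul]
    rw [abs_of_nonneg (Real.sqrt_nonneg _)]
    rw [show |u x| * Real.sqrt (ρ x) * (|v x| * Real.sqrt (ρ x))
      = |u x| * |v x| * (Real.sqrt (ρ x) * Real.sqrt (ρ x)) by ring, hsq,
      abs_of_nonneg (hρpos x).le]
  calc |∫ x in Set.Ioc (0:ℝ) 1, u x * v x * ρ x|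
      ≤ ∫ x in Set.Ioc (0:ℝ) 1, |u x * v x * ρ x| := by
        simpa only [Real.norm_eq_abs] using
          norm_integral_le_integral_norm (μ := ν) (fun x => u x * v x * ρ x)
    _ = ∫ x, ‖U x‖ * ‖V x‖ ∂ν := by
        refine integral_congr_ae (Filter.Eventually.of_forall fun x => heq x)
    _ ≤ (∫ x, ‖U x‖ ^ (2:ℝ) ∂ν) ^ ((1:ℝ)/2) * (∫ x, ‖V x‖ ^ (2:ℝ) ∂ν) ^ ((1:ℝ)/2) := hCS
    _ = Real.sqrt (∫ x in Set.Ioc (0:ℝ) 1, u x ^ 2 * ρ x) *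
        Real.sqrt (∫ x in Set.Ioc (0:ℝ) 1, v x ^ 2 * ρ x) := by
        have e1 : ∀ (w : ℝ → ℝ), (∫ x, ‖w x * Real.sqrt (ρ x)‖ ^ (2:ℝ) ∂ν)
            = ∫ x in Set.Ioc (0:ℝ) 1, w x ^ 2 * ρ x := by
          intro w
          refine integral_congr_ae (Filter.Eventually.of_forall fun x => ?_)
          show ‖w x * Real.sqrt (ρ x)‖ ^ (2:ℝ) = w x ^ 2 * ρ x
          rw [show ((2:ℝ) = ((2:ℕ):ℝ)) by norm_num, Real.rpow_natCast]
          rw [Real.norm_eq_abs, sq_abs, mul_pow, Real.sq_sqrt (hρpos x).le]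
        rw [e1 u, e1 v, ← Real.sqrt_eq_rpow, ← Real.sqrt_eq_rpow]


theorem mychange (T : ℝ → ℝ) (hTm : Measurable T)
    (ρ ρT : ℝ → ℝ) (hρc : Continuous ρ) (hρpos : ∀ x, 0 < ρ x)
    (hρTc : Continuous ρT) (hρTpos : ∀ x, 0 < ρT x)
    (hpush : Measure.map T
        ((volume.restrict (Set.Ioc (0:ℝ) 1)).withDensity fun x => ENNReal.ofReal (ρ x))
      = (volume.restrict (Set.Ioc (0:ℝ) 1)).withDensity fun x => ENNReal.ofReal (ρT x))
    (w : ℝ → ℝ) (hw : Measurable w) :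
    ∫ y in Set.Ioc (0:ℝ) 1, w (T y) * ρ y = ∫ y in Set.Ioc (0:ℝ) 1, w y * ρT y := by
  set ν := volume.restrict (Set.Ioc (0:ℝ) 1)
  have hρm : Measurable fun x => (ρ x).toNNReal := hρc.measurable.real_toNNReal
  have hρTm : Measurable fun x => (ρT x).toNNReal := hρTc.measurable.real_toNNReal
  have e0 : (fun x => ENNReal.ofReal (ρ x)) = fun x => ((ρ x).toNNReal : ℝ≥0∞) := rfl
  have e0T : (fun x => ENNReal.ofReal (ρT x)) = fun x => ((ρT x).toNNReal : ℝ≥0∞) := rfl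
  have h1 : ∫ y in Set.Ioc (0:ℝ) 1, w (T y) * ρ y
      = ∫ y, w (T y) ∂(ν.withDensity fun x => ENNReal.ofReal (ρ x)) := by
    rw [e0, integral_withDensity_eq_integral_smul hρm]
    refine integral_congr_ae (Filter.Eventually.of_forall fun y => ?_)
    simp [NNReal.smul_def, Real.coe_toNNReal _ (hρpos y).le, mul_comm]
  have h2 : ∫ y, w (T y) ∂(ν.withDensity fun x => ENNReal.ofReal (ρ x))
      = ∫ y, w y ∂(Measure.map T (ν.withDensity fun x => ENNReal.ofReal (ρ x))) := by
    rw [integral_map hTm.aemeasurable hw.aestronglyMeasurable]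
  have h3 : ∫ y, w y ∂(ν.withDensity fun x => ENNReal.ofReal (ρT x))
      = ∫ y in Set.Ioc (0:ℝ) 1, w y * ρT y := by
    rw [e0T, integral_withDensity_eq_integral_smul hρTm]
    refine integral_congr_ae (Filter.Eventually.of_forall fun y => ?_)
    simp [NNReal.smul_def, Real.coe_toNNReal _ (hρTpos y).le, mul_comm]
  rw [h1, h2, hpush, h3]

theorem key (k : ℕ) (hk : 1 ≤ k)
    (T : ℝ → ℝ) (hTm : Measurable T)
    (hTmaps : MapsTo T (Set.Ioc (0:ℝ) 1) (Set.Ioc (0:ℝ) 1))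
    (ρ : ℝ → ℝ) (hρc : Continuous ρ) (hρpos : ∀ x, 0 < ρ x)
    (ρT : ℝ → ℝ) (hρTc : Continuous ρT) (hρTpos : ∀ x, 0 < ρT x)
    (hpush : Measure.map T
        ((volume.restrict (Set.Ioc (0:ℝ) 1)).withDensity fun x => ENNReal.ofReal (ρ x))
      = (volume.restrict (Set.Ioc (0:ℝ) 1)).withDensity fun x => ENNReal.ofReal (ρT x))
    (g h : ℝ → ℝ) (hgc : Continuous g) (hhc : Continuous h)
    (hgk : ∀ x, |g x| ≤ (k:ℝ)) (hhk : ∀ x, |h x| ≤ (k:ℝ)^2)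
    (f : ℝ → ℝ) (hf : Measurable f)
    (hf2 : IntegrableOn (fun x => (f x) ^ 2 * ρ x) (Set.Ioc (0:ℝ) 1)) :
    (Real.sqrt (∫ x in Set.Ioc (0:ℝ) 1,
        (-(∫ y in Set.Ioc (0:ℝ) 1, f y * (g (T y) / ρT (T y)) * ρ y)
          * torusHat ρT (T x)) ^ 2 * ρ x)
      ≤ (k : ℝ) * Real.sqrt (∫ x in Set.Ioc (0:ℝ) 1, (f x) ^ 2 * ρ x)) ∧
    (Real.sqrt (∫ x in Set.Ioc (0:ℝ) 1,
        (-(1/2) * (∫ y in Set.Ioc (0:ℝ) 1, f y * (g (T y) / ρT (T y)) * ρ y)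
            * (torusHat ρT (T x) * g (T x))
          - (1/2) * (∫ y in Set.Ioc (0:ℝ) 1, f y * (h (T y) / ρT (T y)) * ρ y)
            * torusHat ρT (T x)
          + (3/2) * (∫ y in Set.Ioc (0:ℝ) 1, f y * (g (T y) / ρT (T y)) * ρ y)
            * (∫ y in Set.Ioc (0:ℝ) 1, g y * torusHat ρT y)
            * torusHat ρT (T x)) ^ 2 * ρ x)
      ≤ 3 * (k : ℝ) ^ 2 * Real.sqrt (∫ x in Set.Ioc (0:ℝ) 1, (f x) ^ 2 * ρ x)) := by
  have hSm : MeasurableSet (Set.Ioc (0:ℝ) 1) := measurableSet_Ioc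
  have hkpos : (0:ℝ) < k := by exact_mod_cast hk
  set I : ℝ := ∫ y in Set.Ioc (0:ℝ) 1, (ρT y)⁻¹ with hI
  have hhat : ∀ x, torusHat ρT x = (I * ρT x)⁻¹ := fun x => rfl
  -- lower bound for ρT on [0,1]
  obtain ⟨z0, hz0, hmin⟩ := isCompact_Icc.exists_isMinOn (α := ℝ)
    (Set.nonempty_Icc.mpr zero_le_one) hρTc.continuousOn
  set c1 : ℝ := ρT z0 with hc1def
  have hc1pos : 0 < c1 := hρTpos z0
  have hc1 : ∀ x ∈ Set.Icc (0:ℝ) 1, c1 ≤ ρT x := fun x hx => hmin hx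
  -- integrability basics
  have hρTne : ∀ x, ρT x ≠ 0 := fun x => (hρTpos x).ne'
  have hρTinvc : Continuous fun x => (ρT x)⁻¹ := hρTc.inv₀ hρTne
  have hρint : IntegrableOn ρ (Set.Ioc (0:ℝ) 1) := hρc.integrableOn_Ioc
  have hρTinvint : IntegrableOn (fun x => (ρT x)⁻¹) (Set.Ioc (0:ℝ) 1) :=
    hρTinvc.integrableOn_Ioc
  have hvol : (volume (Set.Ioc (0:ℝ) 1)).toReal = 1 := by
    simp [Real.volume_Ioc]
  have hIpos : 0 < I := by
    have h1 : (0:ℝ) < ∫ y in Set.Ioc (0:ℝ) 1, (ρT y)⁻¹ := by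
      refine (setIntegral_pos_iff_support_of_nonneg_ae ?_ hρTinvint).mpr ?_
      · exact Filter.Eventually.of_forall fun x => (inv_pos.mpr (hρTpos x)).le
      · have : (Function.support fun x => (ρT x)⁻¹) = Set.univ := by
          ext x; simp [Function.support, (hρTpos x).ne']
        rw [this]
        simp [Real.volume_Ioc]
      
    exact h1
  have hIne : I ≠ 0 := hIpos.ne'
  have hhatpos : ∀ x, 0 < torusHat ρT x := fun x => by
    rw [hhat]; exact inv_pos.mpr (mul_pos hIpos (hρTpos x))
  have hhatc : Continuous (torusHat ρT) := by
    have : Continuous fun x => (I * ρT x)⁻¹ :=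
      (continuous_const.mul hρTc).inv₀ fun x => (mul_pos hIpos (hρTpos x)).ne'
    exact this
  -- ∫ hat = 1
  have hhat0 : ∫ x in Set.Ioc (0:ℝ) 1, torusHat ρT x = 1 := by
    have e : ∀ x, torusHat ρT x = I⁻¹ * (ρT x)⁻¹ := by
      intro x; rw [hhat, mul_inv]
    rw [integral_congr_ae (Filter.Eventually.of_forall fun x => e x)]
    rw [integral_const_mul, ← hI, inv_mul_cancel₀ hIne]
  -- ∫ hat^2 ρT = I⁻¹
  have hhat2 : ∫ x in Set.Ioc (0:ℝ) 1, (torusHat ρT x) ^ 2 * ρT x = I⁻¹ := by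
    have e : ∀ x, (torusHat ρT x) ^ 2 * ρT x = I⁻¹ ^ 2 * (ρT x)⁻¹ := by
      intro x
      rw [hhat, mul_inv, mul_pow, mul_assoc]
      congr 1
      rw [sq, mul_assoc, inv_mul_cancel₀ (hρTne x), mul_one]
    rw [integral_congr_ae (Filter.Eventually.of_forall fun x => e x)]
    rw [integral_const_mul, ← hI, sq, mul_assoc, inv_mul_cancel₀ hIne, mul_one]
  -- change of variables
  have hch := mychange T hTm ρ ρT hρc hρpos hρTc hρTpos hpush
  set N := Real.sqrt (∫ x in Set.Ioc (0:ℝ) 1, f x ^ 2 * ρ x) with hN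
  have hNnn : 0 ≤ N := Real.sqrt_nonneg _
  have hsqrtI : 0 < Real.sqrt I := Real.sqrt_pos.mpr hIpos
  have hss : Real.sqrt I * Real.sqrt I⁻¹ = 1 := by
    rw [Real.sqrt_inv, mul_inv_cancel₀ hsqrtI.ne']
  -- generic bound
  have EAB : ∀ w : ℝ → ℝ, Continuous w → ∀ K : ℝ, 0 ≤ K → (∀ x, |w x| ≤ K) →
      |∫ y in Set.Ioc (0:ℝ) 1, f y * (w (T y) / ρT (T y)) * ρ y|
        ≤ N * (K * Real.sqrt I) := by
    intro w hwc K hK hwK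
    set u : ℝ → ℝ := fun y => w (T y) / ρT (T y) with hu
    have hum : Measurable u := (hwc.measurable.comp hTm).div (hρTc.measurable.comp hTm)
    have hubd : ∀ y ∈ Set.Ioc (0:ℝ) 1, |u y| ≤ K / c1 := by
      intro y hy
      have hTy : T y ∈ Set.Icc (0:ℝ) 1 := Set.Ioc_subset_Icc_self (hTmaps hy)
      have : |u y| = |w (T y)| / ρT (T y) := by
        rw [hu]; rw [abs_div, abs_of_pos (hρTpos (T y))]
      rw [this]
      exact div_le_div₀ hK (hwK _) hc1pos (hc1 _ hTy)
    have hu2int : IntegrableOn (fun y => u y ^ 2 * ρ y) (Set.Ioc (0:ℝ) 1) := by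
      refine Integrable.mono' (hρint.const_mul ((K/c1)^2))
        (((hum.pow_const 2).mul hρc.measurable).aestronglyMeasurable) ?_
      refine (ae_restrict_iff' hSm).mpr (Filter.Eventually.of_forall fun y hy => ?_)
      have h1 : u y ^ 2 ≤ (K/c1)^2 := by
        have h2 := hubd y hy
        have h3 : |u y| ^ 2 ≤ (K/c1)^2 := pow_le_pow_left₀ (abs_nonneg _) h2 2
        rwa [sq_abs] at h3
      rw [Real.norm_eq_abs, abs_of_nonneg (mul_nonneg (sq_nonneg _) (hρpos y).le)]
      exact mul_le_mul_of_nonneg_right h1 (hρpos y).le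
    have hCSa := myCS ρ hρpos hρc f u hf hum hf2 hu2int
    have e1 : (∫ y in Set.Ioc (0:ℝ) 1, u y ^ 2 * ρ y)
        = ∫ z in Set.Ioc (0:ℝ) 1, (w z / ρT z) ^ 2 * ρT z := by
      have := hch (fun z => (w z / ρT z) ^ 2)
        (((hwc.div hρTc hρTne).pow 2).measurable)
      simpa [hu] using this
    have e2 : (∫ z in Set.Ioc (0:ℝ) 1, (w z / ρT z) ^ 2 * ρT z) ≤ K ^ 2 * I := by
      have hpt : ∀ z ∈ Set.Ioc (0:ℝ) 1, (w z / ρT z) ^ 2 * ρT z ≤ K ^ 2 * (ρT z)⁻¹ := by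
        intro z _
        have hwz : w z ^ 2 ≤ K ^ 2 := by
          have := pow_le_pow_left₀ (abs_nonneg (w z)) (hwK z) 2
          rwa [sq_abs] at this
        have e : (w z / ρT z) ^ 2 * ρT z = w z ^ 2 * (ρT z)⁻¹ := by
          rw [div_eq_mul_inv, mul_pow, mul_assoc, sq ((ρT z)⁻¹), mul_assoc,
            inv_mul_cancel₀ (hρTne z), mul_one]
        rw [e]
        exact mul_le_mul_of_nonneg_right hwz (inv_pos.mpr (hρTpos z)).le
      calc (∫ z in Set.Ioc (0:ℝ) 1, (w z / ρT z) ^ 2 * ρT z)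
          ≤ ∫ z in Set.Ioc (0:ℝ) 1, K ^ 2 * (ρT z)⁻¹ := by
            refine setIntegral_mono_on ?_ (hρTinvint.const_mul _) hSm hpt
            exact (((hwc.div hρTc hρTne).pow 2).mul hρTc).integrableOn_Ioc
        _ = K ^ 2 * I := by rw [integral_const_mul, ← hI]
    calc |∫ y in Set.Ioc (0:ℝ) 1, f y * (w (T y) / ρT (T y)) * ρ y|
        = |∫ y in Set.Ioc (0:ℝ) 1, f y * u y * ρ y| := by rw [hu]
      _ ≤ N * Real.sqrt (∫ y in Set.Ioc (0:ℝ) 1, u y ^ 2 * ρ y) := hCSa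
      _ ≤ N * Real.sqrt (K ^ 2 * I) := by
          refine mul_le_mul_of_nonneg_left (Real.sqrt_le_sqrt ?_) hNnn
          rw [e1]; exact e2
      _ = N * (K * Real.sqrt I) := by
          rw [Real.sqrt_mul (sq_nonneg K), Real.sqrt_sq hK]
  set A := ∫ y in Set.Ioc (0:ℝ) 1, f y * (g (T y) / ρT (T y)) * ρ y with hAdef
  set B := ∫ y in Set.Ioc (0:ℝ) 1, f y * (h (T y) / ρT (T y)) * ρ y with hBdef
  set C := ∫ y in Set.Ioc (0:ℝ) 1, g y * torusHat ρT y with hCdef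
  have hA : |A| ≤ N * ((k:ℝ) * Real.sqrt I) := EAB g hgc k hkpos.le hgk
  have hB : |B| ≤ N * ((k:ℝ)^2 * Real.sqrt I) := EAB h hhc ((k:ℝ)^2) (by positivity) hhk
  have hC : |C| ≤ (k:ℝ) := by
    calc |C| ≤ ∫ y in Set.Ioc (0:ℝ) 1, |g y * torusHat ρT y| := by
          rw [hCdef]
          simpa only [Real.norm_eq_abs] using
            norm_integral_le_integral_norm (μ := volume.restrict (Set.Ioc (0:ℝ) 1))
              (fun y => g y * torusHat ρT y)
      _ ≤ ∫ y in Set.Ioc (0:ℝ) 1, (k:ℝ) * torusHat ρT y := by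
          refine setIntegral_mono_on ((hgc.mul hhatc).abs.integrableOn_Ioc)
            (hhatc.integrableOn_Ioc.const_mul _) hSm ?_
          intro y _
          rw [abs_mul, abs_of_pos (hhatpos y)]
          exact mul_le_mul_of_nonneg_right (hgk y) (hhatpos y).le
      _ = (k:ℝ) := by rw [integral_const_mul, hhat0, mul_one]
  have hhat2T : ∫ x in Set.Ioc (0:ℝ) 1, (torusHat ρT (T x)) ^ 2 * ρ x = I⁻¹ := by
    have := hch (fun z => (torusHat ρT z) ^ 2) ((hhatc.pow 2).measurable)
    simpa using this.trans hhat2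
  constructor
  · -- Λ bound
    have eΛ : ∫ x in Set.Ioc (0:ℝ) 1, (-A * torusHat ρT (T x)) ^ 2 * ρ x
        = A ^ 2 * I⁻¹ := by
      have e : ∀ x, (-A * torusHat ρT (T x)) ^ 2 * ρ x
          = A ^ 2 * ((torusHat ρT (T x)) ^ 2 * ρ x) := fun x => by ring
      rw [integral_congr_ae (Filter.Eventually.of_forall e), integral_const_mul, hhat2T]
    rw [eΛ, Real.sqrt_mul (sq_nonneg A), Real.sqrt_sq_eq_abs]
    calc |A| * Real.sqrt I⁻¹ ≤ N * ((k:ℝ) * Real.sqrt I) * Real.sqrt I⁻¹ :=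
          mul_le_mul_of_nonneg_right hA (Real.sqrt_nonneg _)
      _ = (k:ℝ) * N * (Real.sqrt I * Real.sqrt I⁻¹) := by ring
      _ = (k:ℝ) * N := by rw [hss, mul_one]
  · -- Θ bound
    set P : ℝ → ℝ := fun z => -(1/2) * A * g z - 1/2 * B + 3/2 * A * C with hPdef
    have hPc : Continuous P := ((continuous_const.mul hgc).sub continuous_const).add
      continuous_const
    set M0 : ℝ := 1/2 * |A| * k + 1/2 * |B| + 3/2 * (|A| * |C|) with hM0def
    have hM0 : 0 ≤ M0 := by positivity
    have hPbd : ∀ z, |P z| ≤ M0 := by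
      intro z
      have h1 : |P z| ≤ 1/2 * |A| * |g z| + 1/2 * |B| + 3/2 * (|A| * |C|) := by
        rw [hPdef]
        calc |(-(1/2) * A * g z - 1/2 * B) + 3/2 * A * C|
            ≤ |(-(1/2) * A * g z - 1/2 * B)| + |3/2 * A * C| := abs_add_le _ _
          _ ≤ |(-(1/2) * A * g z)| + |1/2 * B| + |3/2 * A * C| :=
              add_le_add_left (abs_sub _ _) _
          _ = 1/2 * |A| * |g z| + 1/2 * |B| + 3/2 * (|A| * |C|) := by
              simp only [abs_mul, abs_neg, abs_of_pos (show (0:ℝ) < 1/2 by norm_num),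
                abs_of_pos (show (0:ℝ) < 3/2 by norm_num)]
              ring
      refine h1.trans ?_
      rw [hM0def]
      gcongr
      exact hgk z
    have eΘ1 : (∫ x in Set.Ioc (0:ℝ) 1,
        (-(1/2) * A * (torusHat ρT (T x) * g (T x)) - 1/2 * B * torusHat ρT (T x)
          + 3/2 * A * C * torusHat ρT (T x)) ^ 2 * ρ x)
        = ∫ z in Set.Ioc (0:ℝ) 1, (P z * torusHat ρT z) ^ 2 * ρT z := by
      have e : ∀ x, (-(1/2) * A * (torusHat ρT (T x) * g (T x))
            - 1/2 * B * torusHat ρT (T x) + 3/2 * A * C * torusHat ρT (T x)) ^ 2 * ρ x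
          = (fun z => (P z * torusHat ρT z) ^ 2) (T x) * ρ x := by
        intro x
        simp only [hPdef]
        ring
      rw [integral_congr_ae (Filter.Eventually.of_forall e)]
      exact hch _ (((hPc.mul hhatc).pow 2).measurable)
    have eΘ2 : (∫ z in Set.Ioc (0:ℝ) 1, (P z * torusHat ρT z) ^ 2 * ρT z)
        ≤ M0 ^ 2 * I⁻¹ := by
      calc (∫ z in Set.Ioc (0:ℝ) 1, (P z * torusHat ρT z) ^ 2 * ρT z)
          ≤ ∫ z in Set.Ioc (0:ℝ) 1, M0 ^ 2 * ((torusHat ρT z) ^ 2 * ρT z) := by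
            refine setIntegral_mono_on
              (((hPc.mul hhatc).pow 2).mul hρTc).integrableOn_Ioc
              ((((hhatc.pow 2).mul hρTc).integrableOn_Ioc).const_mul _) hSm ?_
            intro z _
            have hP2 : P z ^ 2 ≤ M0 ^ 2 := by
              have := pow_le_pow_left₀ (abs_nonneg (P z)) (hPbd z) 2
              rwa [sq_abs] at this
            have e : (P z * torusHat ρT z) ^ 2 * ρT z
                = P z ^ 2 * ((torusHat ρT z) ^ 2 * ρT z) := by ring
            rw [e]
            exact mul_le_mul_of_nonneg_right hP2 (mul_nonneg (sq_nonneg _) (hρTpos z).le)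
        _ = M0 ^ 2 * I⁻¹ := by rw [integral_const_mul, hhat2]
    rw [eΘ1]
    calc Real.sqrt (∫ z in Set.Ioc (0:ℝ) 1, (P z * torusHat ρT z) ^ 2 * ρT z)
        ≤ Real.sqrt (M0 ^ 2 * I⁻¹) := Real.sqrt_le_sqrt eΘ2
      _ = M0 * Real.sqrt I⁻¹ := by
          rw [Real.sqrt_mul (sq_nonneg M0), Real.sqrt_sq hM0]
      _ ≤ (5/2 * (k:ℝ)^2 * Real.sqrt I * N) * Real.sqrt I⁻¹ := by
          refine mul_le_mul_of_nonneg_right ?_ (Real.sqrt_nonneg _)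
          have hAC : |A| * |C| ≤ (N * ((k:ℝ) * Real.sqrt I)) * k :=
            mul_le_mul hA hC (abs_nonneg _)
              (mul_nonneg hNnn (mul_nonneg hkpos.le (Real.sqrt_nonneg I)))
          rw [hM0def]
          have t1 : 1/2 * |A| * (k:ℝ) ≤ 1/2 * (N * ((k:ℝ) * Real.sqrt I)) * k :=
            mul_le_mul_of_nonneg_right
              (mul_le_mul_of_nonneg_left hA (by norm_num)) hkpos.le
          have t2 : 1/2 * |B| ≤ 1/2 * (N * ((k:ℝ)^2 * Real.sqrt I)) :=
            mul_le_mul_of_nonneg_left hB (by norm_num)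
          have t3 : 3/2 * (|A| * |C|) ≤ 3/2 * ((N * ((k:ℝ) * Real.sqrt I)) * k) :=
            mul_le_mul_of_nonneg_left hAC (by norm_num)
          calc 1/2 * |A| * (k:ℝ) + 1/2 * |B| + 3/2 * (|A| * |C|)
              ≤ 1/2 * (N * ((k:ℝ) * Real.sqrt I)) * k + 1/2 * (N * ((k:ℝ)^2 * Real.sqrt I))
                + 3/2 * ((N * ((k:ℝ) * Real.sqrt I)) * k) := add_le_add (add_le_add t1 t2) t3
            _ = 5/2 * (k:ℝ)^2 * Real.sqrt I * N := by ring
      _ = 5/2 * (k:ℝ)^2 * N * (Real.sqrt I * Real.sqrt I⁻¹) := by ring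
      _ = 5/2 * (k:ℝ)^2 * N := by rw [hss, mul_one]
      _ ≤ 3 * (k:ℝ)^2 * N := by nlinarith [mul_nonneg (sq_nonneg (k:ℝ)) hNnn]


theorem aux_d_sin (k : ℕ) (hk : 1 ≤ k) :
    deriv (fun x => Real.sin (k * x) / k) = fun x => Real.cos ((k:ℝ) * x) := by
  have hk0 : (k:ℝ) ≠ 0 := Nat.cast_ne_zero.mpr (by omega)
  funext x
  have hkx : HasDerivAt (fun x : ℝ => (k:ℝ) * x) (k:ℝ) x := by
    simpa using (hasDerivAt_id x).const_mul (k:ℝ)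
  have h1 : HasDerivAt (fun x => Real.sin ((k:ℝ) * x) / (k:ℝ))
      (Real.cos ((k:ℝ) * x) * (k:ℝ) / (k:ℝ)) x :=
    ((Real.hasDerivAt_sin _).comp x hkx).div_const _
  rw [h1.deriv, mul_div_cancel_right₀ _ hk0]

theorem aux_d_cos' (k : ℕ) :
    deriv (fun x => Real.cos ((k:ℝ) * x)) = fun x => -Real.sin ((k:ℝ) * x) * k := by
  funext x
  have hkx : HasDerivAt (fun x : ℝ => (k:ℝ) * x) (k:ℝ) x := by
    simpa using (hasDerivAt_id x).const_mul (k:ℝ)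
  exact ((Real.hasDerivAt_cos _).comp x hkx).deriv

theorem aux_d3_sin (k : ℕ) :
    deriv (fun z => -Real.sin ((k:ℝ) * z) * k * Real.cos ((k:ℝ) * z))
      = fun z => (k:ℝ)^2 * (Real.sin ((k:ℝ)*z)^2 - Real.cos ((k:ℝ)*z)^2) := by
  funext z
  have hkx : HasDerivAt (fun x : ℝ => (k:ℝ) * x) (k:ℝ) z := by
    simpa using (hasDerivAt_id z).const_mul (k:ℝ)
  have h1 : HasDerivAt (fun z => -Real.sin ((k:ℝ) * z) * (k:ℝ))
      (-(Real.cos ((k:ℝ)*z) * k) * k) z := by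
    simpa [mul_comm, mul_assoc] using
      (((Real.hasDerivAt_sin _).comp z hkx).neg).mul_const (k:ℝ)
  have h2 : HasDerivAt (fun z => Real.cos ((k:ℝ) * z)) (-Real.sin ((k:ℝ)*z) * k) z :=
    (Real.hasDerivAt_cos _).comp z hkx
  exact (h1.mul h2).deriv.trans (by ring)

theorem aux_d_cos (k : ℕ) (hk : 1 ≤ k) :
    deriv (fun x => -(Real.cos (k * x) / k)) = fun x => Real.sin ((k:ℝ) * x) := by
  have hk0 : (k:ℝ) ≠ 0 := Nat.cast_ne_zero.mpr (by omega)
  funext x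
  have hkx : HasDerivAt (fun x : ℝ => (k:ℝ) * x) (k:ℝ) x := by
    simpa using (hasDerivAt_id x).const_mul (k:ℝ)
  have h1 : HasDerivAt (fun x => -(Real.cos ((k:ℝ) * x) / (k:ℝ)))
      (-(-Real.sin ((k:ℝ) * x) * (k:ℝ) / (k:ℝ))) x :=
    (((Real.hasDerivAt_cos _).comp x hkx).div_const _).neg
  rw [h1.deriv, mul_div_cancel_right₀ _ hk0, neg_neg]

theorem aux_d_sin' (k : ℕ) :
    deriv (fun x => Real.sin ((k:ℝ) * x)) = fun x => Real.cos ((k:ℝ) * x) * k := by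
  funext x
  have hkx : HasDerivAt (fun x : ℝ => (k:ℝ) * x) (k:ℝ) x := by
    simpa using (hasDerivAt_id x).const_mul (k:ℝ)
  exact ((Real.hasDerivAt_sin _).comp x hkx).deriv

theorem aux_d3_cos (k : ℕ) :
    deriv (fun z => Real.cos ((k:ℝ) * z) * k * Real.sin ((k:ℝ) * z))
      = fun z => (k:ℝ)^2 * (Real.cos ((k:ℝ)*z)^2 - Real.sin ((k:ℝ)*z)^2) := by
  funext z
  have hkx : HasDerivAt (fun x : ℝ => (k:ℝ) * x) (k:ℝ) z := by
    simpa using (hasDerivAt_id z).const_mul (k:ℝ)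
  have h1 : HasDerivAt (fun z => Real.cos ((k:ℝ) * z) * (k:ℝ))
      (-Real.sin ((k:ℝ)*z) * k * k) z :=
    ((Real.hasDerivAt_cos _).comp z hkx).mul_const (k:ℝ)
  have h2 : HasDerivAt (fun z => Real.sin ((k:ℝ) * z)) (Real.cos ((k:ℝ)*z) * k) z :=
    (Real.hasDerivAt_sin _).comp z hkx
  exact (h1.mul h2).deriv.trans (by ring)

set_option maxHeartbeats 1000000 in
/-- For the trigonometric potentials `φ_{2k-1}(x) = sin(kx)/k` and
`φ_{2k}(x) = -cos(kx)/k`, the associated operators satisfy the `L²(ρ dx)` bounds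
`‖Λ_j(f)‖ ≤ k ‖f‖` and `‖Θ_j(f)‖ ≤ 3k² ‖f‖`. -/
theorem Lam_Theta_L2_bounds_trigonometric
    (k : ℕ) (hk : 1 ≤ k)
    -- T : a Borel bijection of the torus
    (T Tinv : ℝ → ℝ) (hTm : Measurable T) (hTinvm : Measurable Tinv)
    (hTmaps : MapsTo T (Set.Ioc (0:ℝ) 1) (Set.Ioc (0:ℝ) 1))
    (hTinvmaps : MapsTo Tinv (Set.Ioc (0:ℝ) 1) (Set.Ioc (0:ℝ) 1))
    (hTinv : ∀ x ∈ Set.Ioc (0:ℝ) 1, Tinv (T x) = x)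
    (hTinv' : ∀ x ∈ Set.Ioc (0:ℝ) 1, T (Tinv x) = x)
    -- ρ : strictly positive continuous probability density with T_#(ρ dx) = ρ_T dx
    (ρ : ℝ → ℝ) (hρc : Continuous ρ) (hρper : Function.Periodic ρ 1)
    (hρpos : ∀ x, 0 < ρ x) (hρone : ∫ x in Set.Ioc (0:ℝ) 1, ρ x = 1)
    (ρT : ℝ → ℝ) (hρTc : Continuous ρT) (hρTper : Function.Periodic ρT 1)
    (hρTpos : ∀ x, 0 < ρT x)
    (hpush : Measure.map T
        ((volume.restrict (Set.Ioc (0:ℝ) 1)).withDensity fun x => ENNReal.ofReal (ρ x))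
      = (volume.restrict (Set.Ioc (0:ℝ) 1)).withDensity fun x => ENNReal.ofReal (ρT x)) :
    -- for each of the two potentials φ_j, j ∈ {2k-1, 2k}
    ∀ φj : ℝ → ℝ,
      (φj = fun x => Real.sin (k * x) / k) ∨ (φj = fun x => -(Real.cos (k * x) / k)) →
      ∀ f : ℝ → ℝ, Measurable f →
        IntegrableOn (fun x => (f x) ^ 2 * ρ x) (Set.Ioc (0:ℝ) 1) →
        -- ‖Λ_j(f)‖_{L²(ρ dx)} ≤ k ⬝ ‖f‖_{L²(ρ dx)}
        (Real.sqrt (∫ x in Set.Ioc (0:ℝ) 1,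
            (-(∫ y in Set.Ioc (0:ℝ) 1,
                  f y * (deriv (deriv φj) (T y) / ρT (T y)) * ρ y)
              * torusHat ρT (T x)) ^ 2 * ρ x)
          ≤ (k : ℝ) * Real.sqrt (∫ x in Set.Ioc (0:ℝ) 1, (f x) ^ 2 * ρ x)) ∧
        -- ‖Θ_j(f)‖_{L²(ρ dx)} ≤ 3k² ⬝ ‖f‖_{L²(ρ dx)}
        (Real.sqrt (∫ x in Set.Ioc (0:ℝ) 1,
            (-(1/2) * (∫ y in Set.Ioc (0:ℝ) 1,
                  f y * (deriv (deriv φj) (T y) / ρT (T y)) * ρ y)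
                * (torusHat ρT (T x) * deriv (deriv φj) (T x))
              - (1/2) * (∫ y in Set.Ioc (0:ℝ) 1,
                  f y * (deriv (fun z => deriv (deriv φj) z * deriv φj z) (T y) / ρT (T y)) * ρ y)
                * torusHat ρT (T x)
              + (3/2) * (∫ y in Set.Ioc (0:ℝ) 1,
                  f y * (deriv (deriv φj) (T y) / ρT (T y)) * ρ y)
                * (∫ y in Set.Ioc (0:ℝ) 1, deriv (deriv φj) y * torusHat ρT y)
                * torusHat ρT (T x)) ^ 2 * ρ x)
          ≤ 3 * (k : ℝ) ^ 2 * Real.sqrt (∫ x in Set.Ioc (0:ℝ) 1, (f x) ^ 2 * ρ x)) := by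
  intro φj hφj f hf hf2
  have hsk : ∀ x : ℝ, |(-Real.sin ((k:ℝ) * x) * k)| ≤ (k:ℝ) := by
    intro x
    rw [abs_mul, abs_neg, Nat.abs_cast]
    calc |Real.sin ((k:ℝ) * x)| * (k:ℝ) ≤ 1 * (k:ℝ) :=
          mul_le_mul_of_nonneg_right (Real.abs_sin_le_one _) (Nat.cast_nonneg k)
      _ = (k:ℝ) := one_mul _
  have hck : ∀ x : ℝ, |(Real.cos ((k:ℝ) * x) * k)| ≤ (k:ℝ) := by
    intro x
    rw [abs_mul, Nat.abs_cast]
    calc |Real.cos ((k:ℝ) * x)| * (k:ℝ) ≤ 1 * (k:ℝ) :=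
          mul_le_mul_of_nonneg_right (Real.abs_cos_le_one _) (Nat.cast_nonneg k)
      _ = (k:ℝ) := one_mul _
  have hsq1 : ∀ x : ℝ, |Real.sin ((k:ℝ)*x)^2 - Real.cos ((k:ℝ)*x)^2| ≤ 1 := by
    intro x
    have h1 := Real.sin_sq_add_cos_sq ((k:ℝ)*x)
    have h2 := sq_nonneg (Real.sin ((k:ℝ)*x))
    have h3 := sq_nonneg (Real.cos ((k:ℝ)*x))
    rw [abs_le]; constructor <;> nlinarith
  have hsq2 : ∀ x : ℝ, |Real.cos ((k:ℝ)*x)^2 - Real.sin ((k:ℝ)*x)^2| ≤ 1 := by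
    intro x
    have := hsq1 x
    rwa [abs_sub_comm] at this
  have hmulc : Continuous fun x : ℝ => (k:ℝ) * x := continuous_const.mul continuous_id
  have hgc1 : Continuous fun x => -Real.sin ((k:ℝ) * x) * (k:ℝ) :=
    ((Real.continuous_sin.comp hmulc).neg).mul continuous_const
  have hgc2 : Continuous fun x => Real.cos ((k:ℝ) * x) * (k:ℝ) :=
    (Real.continuous_cos.comp hmulc).mul continuous_const
  have hhc1 : Continuous fun z => (k:ℝ)^2 * (Real.sin ((k:ℝ)*z)^2 - Real.cos ((k:ℝ)*z)^2) :=
    continuous_const.mul (((Real.continuous_sin.comp hmulc).pow 2).sub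
      ((Real.continuous_cos.comp hmulc).pow 2))
  have hhc2 : Continuous fun z => (k:ℝ)^2 * (Real.cos ((k:ℝ)*z)^2 - Real.sin ((k:ℝ)*z)^2) :=
    continuous_const.mul (((Real.continuous_cos.comp hmulc).pow 2).sub
      ((Real.continuous_sin.comp hmulc).pow 2))
  rcases hφj with hcase | hcase
  · subst hcase
    simp only [aux_d_sin k hk, aux_d_cos' k]
    simp only [aux_d3_sin k]
    refine key k hk T hTm hTmaps ρ hρc hρpos ρT hρTc hρTpos hpush
      (fun x => -Real.sin ((k:ℝ) * x) * k)
      (fun z => (k:ℝ)^2 * (Real.sin ((k:ℝ)*z)^2 - Real.cos ((k:ℝ)*z)^2))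
      hgc1 hhc1 hsk ?_ f hf hf2
    intro x
    rw [abs_mul, abs_of_nonneg (sq_nonneg ((k:ℝ)))]
    calc (k:ℝ)^2 * |Real.sin ((k:ℝ)*x)^2 - Real.cos ((k:ℝ)*x)^2| ≤ (k:ℝ)^2 * 1 :=
          mul_le_mul_of_nonneg_left (hsq1 x) (sq_nonneg _)
      _ = (k:ℝ)^2 := mul_one _
  · subst hcase
    simp only [aux_d_cos k hk, aux_d_sin' k]
    simp only [aux_d3_cos k]
    refine key k hk T hTm hTmaps ρ hρc hρpos ρT hρTc hρTpos hpush
      (fun x => Real.cos ((k:ℝ) * x) * k)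
      (fun z => (k:ℝ)^2 * (Real.cos ((k:ℝ)*z)^2 - Real.sin ((k:ℝ)*z)^2))
      hgc2 hhc2 hck ?_ f hf hf2
    intro x
    rw [abs_mul, abs_of_nonneg (sq_nonneg ((k:ℝ)))]
    calc (k:ℝ)^2 * |Real.cos ((k:ℝ)*x)^2 - Real.sin ((k:ℝ)*x)^2| ≤ (k:ℝ)^2 * 1 :=
          mul_le_mul_of_nonneg_left (hsq2 x) (sq_nonneg _)
      _ = (k:ℝ)^2 := mul_one _
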